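/- Let h: ℝ^{k×p} → (−∞, ∞] be the indicator function of the consensus set {X ∈ ℝ^{k×p} : X_1 = X_2 = ⋯ = X_k} (rows equal), let D be a diagonal positive definite matrix of size kp, and write a_{i,j} for the diagonal entry of D⁻¹ corresponding to row i, coordinate j. Then for any X ∈ ℝ^{k×p} and γ > 0, the scaled proximal operator prox^{D⁻¹}_{γh}(X) equals z·1_k^T, where z ∈ ℝ^p is the weighted average z_j = (∑_{i=1}^k a_{i,j} X_{i,j}) / (∑_{i=1}^k a_{i,j}); i.e., each row of prox^{D⁻¹}_{γh}(X) equals z. -/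

import Mathlib

open Finset Classical
open scoped RealInnerProductSpace

noncomputable section

/-- The indicator (in the `EReal` sense) of the consensus set `{X : X_1 = ⋯ = X_k}`. -/
def consensusIndicator {k p : ℕ} (X : Fin k → EuclideanSpace ℝ (Fin p)) : EReal :=
  if ∀ i i' : Fin k, X i = X i' then (0 : EReal) else ⊤

/-- The squared scaled norm `‖V‖²_{D⁻¹} = ∑_{i,j} a_{i,j} V_{i,j}²` on `ℝ^{k×p}`,
where `a_{i,j}` are the diagonal entries of `D⁻¹`. -/
def scaledSq {k p : ℕ} (a : Fin k → Fin p → ℝ) (V : Fin k → EuclideanSpace ℝ (Fin p)) : ℝ :=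
  ∑ i, ∑ j, a i j * (V i j) ^ 2

/-- `Z = prox^{D⁻¹}_{γ h}(X)` for the consensus indicator `h`:
`Z` minimizes `W ↦ h(W) + (1/(2γ)) ‖X − W‖²_{D⁻¹}`. -/
def IsConsensusProx {k p : ℕ} (a : Fin k → Fin p → ℝ) (γ : ℝ)
    (X Z : Fin k → EuclideanSpace ℝ (Fin p)) : Prop :=
  ∀ W : Fin k → EuclideanSpace ℝ (Fin p),
    consensusIndicator Z + ((1 / (2 * γ) * scaledSq a (X - Z) : ℝ) : EReal)
      ≤ consensusIndicator W + ((1 / (2 * γ) * scaledSq a (X - W) : ℝ) : EReal)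

lemma scaledSq_const_decomp {k p : ℕ} (hk : 0 < k)
    (a : Fin k → Fin p → ℝ) (ha : ∀ i j, 0 < a i j)
    (X : Fin k → EuclideanSpace ℝ (Fin p))
    (z : EuclideanSpace ℝ (Fin p))
    (hz : ∀ j, z j = (∑ i, a i j * X i j) / (∑ i, a i j))
    (w : EuclideanSpace ℝ (Fin p)) :
    scaledSq a (X - fun _ => w)
      = scaledSq a (X - fun _ => z) + ∑ j, (∑ i, a i j) * (w j - z j) ^ 2 := by
  unfold scaledSq
  rw [Finset.sum_comm]
  conv_rhs => rw [Finset.sum_comm]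
  rw [← Finset.sum_add_distrib]
  refine Finset.sum_congr rfl fun j _ => ?_
  have hS : 0 < ∑ i, a i j := Finset.sum_pos (fun i _ => ha i j) ⟨⟨0, hk⟩, Finset.mem_univ _⟩
  have hT : ∑ i, a i j * X i j = (∑ i, a i j) * z j := by
    rw [hz j]; field_simp
  have h1 : ∀ i : Fin k, a i j * ((X - fun _ => w : Fin k → EuclideanSpace ℝ (Fin p)) i j) ^ 2
      = a i j * ((X - fun _ => z : Fin k → EuclideanSpace ℝ (Fin p)) i j) ^ 2
        + (a i j * X i j) * (2 * z j - 2 * w j)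
        + a i j * ((w j) ^ 2 - (z j) ^ 2) := by
    intro i
    have hw : (X - fun _ => w : Fin k → EuclideanSpace ℝ (Fin p)) i j = X i j - w j := rfl
    have h2 : (X - fun _ => z : Fin k → EuclideanSpace ℝ (Fin p)) i j = X i j - z j := rfl
    rw [hw, h2]; ring
  rw [Finset.sum_congr rfl fun i _ => h1 i]
  rw [Finset.sum_add_distrib, Finset.sum_add_distrib, ← Finset.sum_mul, ← Finset.sum_mul, hT]
  ring

/-- The scaled proximal operator of the consensus indicator is the
`D⁻¹`-weighted average of the rows: `prox^{D⁻¹}_{γh}(X) = z 1ᵀ` with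
`z_j = (∑ i a_{i,j} X_{i,j}) / (∑ i a_{i,j})`. -/
theorem consensus_scaled_prox
    {k p : ℕ} (hk : 0 < k)
    (a : Fin k → Fin p → ℝ) (ha : ∀ i j, 0 < a i j)
    (γ : ℝ) (hγ : 0 < γ)
    (X : Fin k → EuclideanSpace ℝ (Fin p))
    (z : EuclideanSpace ℝ (Fin p))
    (hz : ∀ j, z j = (∑ i, a i j * X i j) / (∑ i, a i j)) :
    IsConsensusProx a γ X (fun _ => z) ∧
      ∀ W, IsConsensusProx a γ X W → W = fun _ => z := by
  have i0 : Fin k := ⟨0, hk⟩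
  have hcz : consensusIndicator (fun _ : Fin k => z) = 0 := by
    simp [consensusIndicator]
  have hγ2 : 0 < 1 / (2 * γ) := by positivity
  constructor
  · intro W
    rw [hcz, zero_add]
    by_cases hW : ∀ i i' : Fin k, W i = W i'
    · have hWc : W = fun _ => W i0 := funext fun i => hW i i0
      rw [consensusIndicator, if_pos hW, zero_add]
      rw [EReal.coe_le_coe_iff]
      rw [hWc, scaledSq_const_decomp hk a ha X z hz (W i0)]
      have : 0 ≤ ∑ j, (∑ i, a i j) * (W i0 j - z j) ^ 2 :=
        Finset.sum_nonneg fun j _ => mul_nonneg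
          (Finset.sum_pos (fun i _ => ha i j) ⟨i0, Finset.mem_univ _⟩).le (sq_nonneg _)
      nlinarith
    · rw [consensusIndicator, if_neg hW]
      rw [EReal.top_add_coe]
      exact le_top
  · intro W hW
    have hle := hW (fun _ => z)
    rw [hcz, zero_add] at hle
    by_cases hWc : ∀ i i' : Fin k, W i = W i'
    · have hWeq : W = fun _ => W i0 := funext fun i => hWc i i0
      rw [consensusIndicator, if_pos hWc, zero_add, EReal.coe_le_coe_iff] at hle
      rw [hWeq, scaledSq_const_decomp hk a ha X z hz (W i0)] at hle
      have hsum : ∑ j, (∑ i, a i j) * (W i0 j - z j) ^ 2 ≤ 0 := by nlinarith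
      have hnn : ∀ j ∈ (Finset.univ : Finset (Fin p)), 0 ≤ (∑ i, a i j) * (W i0 j - z j) ^ 2 :=
        fun j _ => mul_nonneg
          (Finset.sum_pos (fun i _ => ha i j) ⟨i0, Finset.mem_univ _⟩).le (sq_nonneg _)
      have hzero : ∀ j ∈ Finset.univ, (∑ i, a i j) * (W i0 j - z j) ^ 2 = 0 := by
        apply (Finset.sum_eq_zero_iff_of_nonneg hnn).mp
        exact le_antisymm hsum (Finset.sum_nonneg hnn)
      have hwz : W i0 = z := by
        ext j
        have hS : 0 < ∑ i, a i j := Finset.sum_pos (fun i _ => ha i j) ⟨i0, Finset.mem_univ _⟩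
        have := hzero j (Finset.mem_univ j)
        have hsq : (W i0 j - z j) ^ 2 = 0 := by
          rcases mul_eq_zero.mp this with h | h
          · exact absurd h hS.ne'
          · exact h
        exact sub_eq_zero.mp ((pow_eq_zero_iff (two_ne_zero)).mp hsq)
      rw [hWeq, hwz]
    · rw [consensusIndicator, if_neg hWc, EReal.top_add_coe] at hle
      exact ((EReal.coe_ne_top _) (top_le_iff.mp hle)).elim
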